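/- For any linear code C ⊆ F_{q^m}^n, the minimum sum-rank distance equals the minimum, over all invertible block-diagonal matrices A = diag(A_1,...,A_ℓ) with A_i ∈ F_q^{n_i×n_i} invertible, of the minimum Hamming distance of the code C·A. -/

import Mathlib

open Matrix Finset

noncomputable def rkWt {K L : Type*} [Field K] [Field L] [Algebra K L] {m : ℕ}
    (B : Module.Basis (Fin m) K L) {p : ℕ} (v : Fin p → L) : ℕ :=
  (Matrix.of (fun a (j : Fin p) => B.repr (v j) a) : Matrix (Fin m) (Fin p) K).rank

/-- Sum-rank weight for the partition `n 0 + ⋯ + n (ℓ-1)`. -/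
noncomputable def srWt {K L : Type*} [Field K] [Field L] [Algebra K L] {m ℓ : ℕ}
    (B : Module.Basis (Fin m) K L) {n : Fin ℓ → ℕ} (c : ∀ i, Fin (n i) → L) : ℕ :=
  ∑ i, rkWt B (c i)

open Classical in
/-- Hamming weight (number of nonzero coordinates). -/
noncomputable def hamWt {L : Type*} [Field L] {ℓ : ℕ} {n : Fin ℓ → ℕ}
    (c : ∀ i, Fin (n i) → L) : ℕ :=
  ∑ i, (Finset.univ.filter (fun j => c i j ≠ 0)).card

/-- Blockwise right multiplication `c ↦ c ⬝ diag(A_1, …, A_ℓ)` with `A_i` over the base field. -/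
noncomputable def blockMul {K L : Type*} [Field K] [Field L] [Algebra K L] {ℓ : ℕ}
    {n : Fin ℓ → ℕ} (A : ∀ i, Matrix (Fin (n i)) (Fin (n i)) K)
    (c : ∀ i, Fin (n i) → L) : ∀ i, Fin (n i) → L :=
  fun i => Matrix.vecMul (c i) ((A i).map (algebraMap K L))

section Aux

variable {K L : Type*} [Field K] [Field L] [Algebra K L] {m : ℕ} (B : Module.Basis (Fin m) K L)

/-- The matrix of a vector after base-field column operations is the product. -/
lemma matrixOf_vecMul {p : ℕ} (v : Fin p → L) (A : Matrix (Fin p) (Fin p) K) :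
    (Matrix.of (fun a (j : Fin p) =>
        B.repr (Matrix.vecMul v (A.map (algebraMap K L)) j) a) :
          Matrix (Fin m) (Fin p) K) =
      (Matrix.of (fun a (j : Fin p) => B.repr (v j) a) : Matrix (Fin m) (Fin p) K) * A := by
  ext a j
  have h : ∀ k, v k * algebraMap K L (A k j) = A k j • v k := fun k => by
    rw [mul_comm, ← Algebra.smul_def]
  simp only [Matrix.of_apply, Matrix.vecMul, dotProduct, Matrix.map_apply, h,
    Matrix.mul_apply]
  rw [map_sum]
  simp [mul_comm]

lemma rkWt_vecMul {p : ℕ} (v : Fin p → L) {A : Matrix (Fin p) (Fin p) K} (hA : IsUnit A) :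
    rkWt B (Matrix.vecMul v (A.map (algebraMap K L))) = rkWt B v := by
  unfold rkWt
  rw [matrixOf_vecMul]
  exact Matrix.rank_mul_eq_left_of_isUnit_det A _ ((Matrix.isUnit_iff_isUnit_det A).mp hA)

/-- `rkWt` is the dimension of the `K`-span of the coordinates. -/
lemma rkWt_eq {p : ℕ} (v : Fin p → L) :
    rkWt B v = Module.finrank K (Submodule.span K (Set.range v)) := by
  classical
  have hB : FiniteDimensional K L := Module.Finite.of_basis B
  set T : (Fin p → K) →ₗ[K] L := Fintype.linearCombination K v with hT
  set φ : L ≃ₗ[K] (Fin m → K) := B.repr ≪≫ₗ Finsupp.linearEquivFunOnFinite K K (Fin m) with hφ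
  have key : (Matrix.of (fun a (j : Fin p) => B.repr (v j) a) :
      Matrix (Fin m) (Fin p) K).mulVecLin = (φ : L →ₗ[K] (Fin m → K)).comp T := by
    ext e a
    simp only [Matrix.mulVecLin_apply, Matrix.mulVec, dotProduct, Matrix.of_apply,
      LinearMap.comp_apply, hT, Fintype.linearCombination_apply]
    rw [hφ]
    simp only [LinearEquiv.trans_apply, map_sum]
    simp [Finsupp.linearEquivFunOnFinite, mul_comm]
    exact Finset.sum_congr rfl fun k _ => mul_comm _ _
  rw [rkWt, Matrix.rank, key, LinearMap.range_comp, LinearEquiv.finrank_map_eq, hT,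
    Fintype.range_linearCombination K v]

open Classical in
/-- `rkWt` is at most the number of nonzero coordinates. -/
lemma rkWt_le_card {p : ℕ} (v : Fin p → L) :
    rkWt B v ≤ (Finset.univ.filter (fun j => v j ≠ 0)).card := by
  classical
  rw [rkWt_eq]
  set s : Finset L := (Finset.univ.filter (fun j => v j ≠ 0)).image v with hs
  have hle : Submodule.span K (Set.range v) ≤ Submodule.span K (s : Set L) := by
    rw [Submodule.span_le]
    rintro _ ⟨j, rfl⟩
    by_cases hj : v j = 0
    · rw [hj]; exact Submodule.zero_mem _
    · exact Submodule.subset_span (by simp [hs, Finset.mem_image]; exact ⟨j, hj, rfl⟩)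
  calc Module.finrank K (Submodule.span K (Set.range v))
      ≤ Module.finrank K (Submodule.span K (s : Set L)) := Submodule.finrank_mono hle
    _ ≤ s.card := finrank_span_finset_le_card s
    _ ≤ _ := Finset.card_image_le

open Classical in
/-- The key construction: an invertible base-field matrix concentrating the support. -/
lemma exists_unit_matrix {p : ℕ} (v : Fin p → L) :
    ∃ A : Matrix (Fin p) (Fin p) K, IsUnit A ∧
      (Finset.univ.filter
        (fun j => Matrix.vecMul v (A.map (algebraMap K L)) j ≠ 0)).card ≤ rkWt B v := by
  classical
  have hB : FiniteDimensional K L := Module.Finite.of_basis B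
  by_cases hp : p = 0
  · subst hp
    exact ⟨1, isUnit_one, by simp⟩
  set T : (Fin p → K) →ₗ[K] L := Fintype.linearCombination K v with hT
  set r : ℕ := Module.finrank K (LinearMap.range T) with hr
  set s : ℕ := Module.finrank K (LinearMap.ker T) with hsdef
  have hrs : r + s = p := by
    have := LinearMap.finrank_range_add_finrank_ker T
    rwa [Module.finrank_fin_fun] at this
  have hrk : rkWt B v = r := by
    rw [rkWt_eq, hr, hT, ← Fintype.range_linearCombination K v]
  -- basis of the range and its preimages
  let w : Module.Basis (Fin r) K (LinearMap.range T) := Module.finBasis K _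
  have hw : ∀ i, ∃ x, T x = (w i : L) := fun i => LinearMap.mem_range.mp (w i).2
  let u : Fin r → (Fin p → K) := fun i => (hw i).choose
  have hu : ∀ i, T (u i) = (w i : L) := fun i => (hw i).choose_spec
  -- basis of the kernel
  let bk : Module.Basis (Fin s) K (LinearMap.ker T) := Module.finBasis K _
  let bv : Fin s → (Fin p → K) := fun t => (bk t : Fin p → K)
  have hbv : ∀ t, T (bv t) = 0 := fun t => (bk t).2
  -- linear independence facts
  have hwli : LinearIndependent K (fun i => (w i : L)) :=
    w.linearIndependent.map' (LinearMap.range T).subtype (Submodule.ker_subtype _)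
  have huli : LinearIndependent K u := by
    apply LinearIndependent.of_comp T
    have : T ∘ u = fun i => (w i : L) := funext fun i => hu i
    rw [this]; exact hwli
  have hbvli : LinearIndependent K bv :=
    bk.linearIndependent.map' (LinearMap.ker T).subtype (Submodule.ker_subtype _)
  have hbvker : Submodule.span K (Set.range bv) ≤ LinearMap.ker T := by
    rw [Submodule.span_le]
    rintro _ ⟨t, rfl⟩
    exact (bk t).2
  have hdisj : Disjoint (Submodule.span K (Set.range u)) (Submodule.span K (Set.range bv)) := by
    refine Disjoint.mono_right hbvker ?_
    rw [Submodule.disjoint_def]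
    intro x hxu hxk
    obtain ⟨c, hc⟩ := (Submodule.mem_span_range_iff_exists_fun K).mp hxu
    have hTx : ∑ i, c i • (w i : L) = 0 := by
      have := congrArg T hc
      rw [map_sum] at this
      simp only [_root_.map_smul, hu] at this
      rwa [LinearMap.mem_ker.mp hxk] at this
    have hc0 : ∀ i, c i = 0 := Fintype.linearIndependent_iff.mp hwli c hTx
    rw [← hc]
    simp [hc0]
  have hli : LinearIndependent K (Sum.elim u bv) := huli.sum_type hbvli hdisj
  haveI : Nonempty (Fin r ⊕ Fin s) := by
    rcases Nat.eq_zero_or_pos r with h | h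
    · exact ⟨Sum.inr ⟨0, by omega⟩⟩
    · exact ⟨Sum.inl ⟨0, h⟩⟩
  have hcard : Fintype.card (Fin r ⊕ Fin s) = Module.finrank K (Fin p → K) := by
    simp [Module.finrank_fin_fun, hrs]
  let bs : Module.Basis (Fin r ⊕ Fin s) K (Fin p → K) :=
    basisOfLinearIndependentOfCardEqFinrank hli hcard
  have hbs : ⇑bs = Sum.elim u bv := coe_basisOfLinearIndependentOfCardEqFinrank hli hcard
  let e : (Fin r ⊕ Fin s) ≃ Fin p := finSumFinEquiv.trans (finCongr hrs)
  let bs' : Module.Basis (Fin p) K (Fin p → K) := bs.reindex e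
  let A : Matrix (Fin p) (Fin p) K := (Pi.basisFun K (Fin p)).toMatrix ⇑bs'
  have hA : IsUnit A := by
    letI := Module.Basis.invertibleToMatrix (Pi.basisFun K (Fin p)) bs'
    exact isUnit_of_invertible A
  refine ⟨A, hA, ?_⟩
  have hcol : ∀ j, Matrix.vecMul v (A.map (algebraMap K L)) j = T (bs' j) := by
    intro j
    simp only [Matrix.vecMul, dotProduct, Matrix.map_apply, A, Module.Basis.toMatrix_apply,
      Pi.basisFun_repr, hT, Fintype.linearCombination_apply, Algebra.smul_def]
    exact Finset.sum_congr rfl fun k _ => mul_comm _ _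
  have hker2 : ∀ t : Fin s, Matrix.vecMul v (A.map (algebraMap K L)) (e (Sum.inr t)) = 0 := by
    intro t
    rw [hcol]
    have : bs' (e (Sum.inr t)) = bv t := by
      simp only [bs', Module.Basis.reindex_apply, Equiv.symm_apply_apply, hbs, Sum.elim_inr]
    rw [this, hbv]
  have hsub : (Finset.univ.filter
      (fun j => Matrix.vecMul v (A.map (algebraMap K L)) j ≠ 0)) ⊆
      Finset.univ.image (fun i : Fin r => e (Sum.inl i)) := by
    intro j hj
    rw [Finset.mem_filter] at hj
    rcases h : e.symm j with i | t
    · refine Finset.mem_image.mpr ⟨i, Finset.mem_univ _, ?_⟩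
      rw [← h, Equiv.apply_symm_apply]
    · exfalso
      apply hj.2
      have : j = e (Sum.inr t) := by rw [← h, Equiv.apply_symm_apply]
      rw [this]
      exact hker2 t
  calc _ ≤ (Finset.univ.image (fun i : Fin r => e (Sum.inl i))).card :=
        Finset.card_le_card hsub
    _ ≤ (Finset.univ : Finset (Fin r)).card := Finset.card_image_le
    _ = r := by simp
    _ = rkWt B v := hrk.symm

end Aux

/-- the minimum sum-rank distance of a linear code equals the minimum, over
invertible block-diagonal matrices `A = diag(A_1,…,A_ℓ)` over the base field, of the
minimum Hamming distance of `C·A`. -/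
theorem srDist_eq_min_hamming {K L : Type*} [Field K] [Field L] [Algebra K L]
    {m ℓ : ℕ} (B : Module.Basis (Fin m) K L) {n : Fin ℓ → ℕ}
    (C : Submodule L (∀ i, Fin (n i) → L)) (hC : C ≠ ⊥) :
    sInf {w | ∃ c ∈ C, c ≠ 0 ∧ w = srWt B c} =
      sInf {d | ∃ A : ∀ i, Matrix (Fin (n i)) (Fin (n i)) K,
        (∀ i, IsUnit (A i)) ∧
        d = sInf {w | ∃ c ∈ C, c ≠ 0 ∧ w = hamWt (blockMul A c)}} := by
  classical
  obtain ⟨c₁, hc₁C, hc₁⟩ := Submodule.exists_mem_ne_zero_of_ne_bot hC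
  -- key pointwise inequality: `srWt c ≤ hamWt (blockMul A c)` for `A` invertible
  have hkey : ∀ (A : ∀ i, Matrix (Fin (n i)) (Fin (n i)) K), (∀ i, IsUnit (A i)) →
      ∀ c : ∀ i, Fin (n i) → L, srWt B c ≤ hamWt (blockMul A c) := by
    intro A hA c
    unfold srWt hamWt blockMul
    refine Finset.sum_le_sum fun i _ => ?_
    calc rkWt B (c i) = rkWt B (Matrix.vecMul (c i) ((A i).map (algebraMap K L))) :=
          (rkWt_vecMul B (c i) (hA i)).symm
      _ ≤ _ := by
          refine le_trans (rkWt_le_card B _) (le_of_eq ?_)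
          congr 1
  apply le_antisymm
  · -- LHS ≤ RHS
    have hne : {d | ∃ A : ∀ i, Matrix (Fin (n i)) (Fin (n i)) K,
        (∀ i, IsUnit (A i)) ∧
        d = sInf {w | ∃ c ∈ C, c ≠ 0 ∧ w = hamWt (blockMul A c)}}.Nonempty :=
      ⟨_, fun _ => 1, fun _ => isUnit_one, rfl⟩
    obtain ⟨A, hA, hd⟩ := Nat.sInf_mem hne
    have hinner : {w | ∃ c ∈ C, c ≠ 0 ∧ w = hamWt (blockMul A c)}.Nonempty :=
      ⟨_, c₁, hc₁C, hc₁, rfl⟩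
    obtain ⟨c, hcC, hc0, hcw⟩ := Nat.sInf_mem hinner
    rw [hd, hcw]
    calc sInf {w | ∃ c ∈ C, c ≠ 0 ∧ w = srWt B c} ≤ srWt B c :=
          Nat.sInf_le ⟨c, hcC, hc0, rfl⟩
      _ ≤ hamWt (blockMul A c) := hkey A hA c
  · -- RHS ≤ LHS
    have hne : {w | ∃ c ∈ C, c ≠ 0 ∧ w = srWt B c}.Nonempty := ⟨_, c₁, hc₁C, hc₁, rfl⟩
    obtain ⟨c₀, hc₀C, hc₀0, hw₀⟩ := Nat.sInf_mem hne
    choose A hAu hAcard using fun i => exists_unit_matrix B (c₀ i)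
    calc sInf {d | ∃ A : ∀ i, Matrix (Fin (n i)) (Fin (n i)) K,
          (∀ i, IsUnit (A i)) ∧
          d = sInf {w | ∃ c ∈ C, c ≠ 0 ∧ w = hamWt (blockMul A c)}}
        ≤ sInf {w | ∃ c ∈ C, c ≠ 0 ∧ w = hamWt (blockMul A c)} :=
          Nat.sInf_le ⟨A, hAu, rfl⟩
      _ ≤ hamWt (blockMul A c₀) := Nat.sInf_le ⟨c₀, hc₀C, hc₀0, rfl⟩
      _ ≤ srWt B c₀ := by
          unfold hamWt blockMul srWt
          refine Finset.sum_le_sum fun i _ => ?_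
          refine le_trans (le_of_eq ?_) (hAcard i)
          congr 1
      _ = sInf {w | ∃ c ∈ C, c ≠ 0 ∧ w = srWt B c} := hw₀.symm
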